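/- Let q be a prime power and m, s, k, d positive integers with s ≥ 2, k ≤ ⌊q/m⌋^{s−1} and d ≤ m(q − k·m^{s−1} − 2). Then for every sequence (with possible repetitions) w_1,…,w_k of points of 𝔽_q^s there exist pairwise disjoint subsets R_1,…,R_k ⊆ 𝔽_q^s with w_j ∉ R_j for each j, such that for each j ∈ {1,…,k}, any two polynomials P, Q ∈ 𝔽_q[x_1,…,x_s] of total degree at most d satisfying P^{(<m)}(w) = Q^{(<m)}(w) for every w ∈ R_j also satisfy P^{(<m)}(w_j) = Q^{(<m)}(w_j). (That is, the multiplicity code C(m,d,s,q) is a k-batch code.) -/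

import Mathlib

open MvPolynomial

/-- The `i`-th Hasse derivative of a multivariate polynomial `P`, i.e. the coefficient of
`z^i` in the expansion of `P(x + z)`. -/
noncomputable def hasseDeriv {F : Type*} [Field F] {s : ℕ}
    (i : Fin s →₀ ℕ) (P : MvPolynomial (Fin s) F) : MvPolynomial (Fin s) F :=
  ∑ m ∈ P.support,
    monomial (m - i) ((∏ j : Fin s, ((m j).choose (i j) : F)) * P.coeff m)

namespace Stmt7Aux

set_option linter.unusedSectionVars false
set_option linter.unusedVariables false

variable {F : Type*} [Field F] {s : ℕ}

theorem hasseDeriv_eq (i : Fin s →₀ ℕ) (P : MvPolynomial (Fin s) F) :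
    hasseDeriv i P
      = (AddMonoidAlgebra.coeff P).sum fun n c => monomial (n - i) ((∏ j : Fin s, ((n j).choose (i j) : F)) * c) := by
  rfl

theorem hasseDeriv_zero (i : Fin s →₀ ℕ) : hasseDeriv i (0 : MvPolynomial (Fin s) F) = 0 := by
  simp [hasseDeriv]

theorem hasseDeriv_add (i : Fin s →₀ ℕ) (P Q : MvPolynomial (Fin s) F) :
    hasseDeriv i (P + Q) = hasseDeriv i P + hasseDeriv i Q := by
  rw [hasseDeriv_eq, hasseDeriv_eq, hasseDeriv_eq]
  exact Finsupp.sum_add_index' (by simp) (by intro a b c; rw [mul_add, map_add])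

theorem hasseDeriv_sub (i : Fin s →₀ ℕ) (P Q : MvPolynomial (Fin s) F) :
    hasseDeriv i (P - Q) = hasseDeriv i P - hasseDeriv i Q := by
  rw [hasseDeriv_eq, hasseDeriv_eq, hasseDeriv_eq]
  exact Finsupp.sum_sub_index (by intro a b c; rw [mul_sub, map_sub])

theorem hasseDeriv_sum {ι : Type*} (t : Finset ι) (f : ι → MvPolynomial (Fin s) F)
    (i : Fin s →₀ ℕ) :
    hasseDeriv i (∑ x ∈ t, f x) = ∑ x ∈ t, hasseDeriv i (f x) := by
  classical
  induction t using Finset.induction with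
  | empty => simp [hasseDeriv_zero]
  | insert _ _ hx ih => rename_i a t'
                        rw [Finset.sum_insert hx, Finset.sum_insert hx, hasseDeriv_add, ih]

theorem hasseDeriv_monomial (i n : Fin s →₀ ℕ) (c : F) :
    hasseDeriv i (monomial n c)
      = monomial (n - i) ((∏ j : Fin s, ((n j).choose (i j) : F)) * c) := by
  classical
  by_cases hc : c = 0
  · simp [hasseDeriv, hc]
  · unfold hasseDeriv
    rw [support_monomial, if_neg hc, Finset.sum_singleton, coeff_monomial, if_pos rfl]

theorem pow_add_expand (a b : F) (n : ℕ) :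
    (Polynomial.C a + Polynomial.X * Polynomial.C b) ^ n
      = ∑ j ∈ Finset.range (n + 1),
          Polynomial.C (a ^ (n - j) * b ^ j * (n.choose j)) * Polynomial.X ^ j := by
  rw [add_comm, add_pow]
  refine Finset.sum_congr rfl fun j hj => ?_
  simp only [mul_pow, Polynomial.C_mul, Polynomial.C_pow, Polynomial.C_eq_natCast]
  push_cast
  ring


def Ew (s e : ℕ) : Finset (Fin s → ℕ) :=
  (Fintype.piFinset fun _ : Fin s => Finset.range (e + 1)).filter fun J => ∑ l, J l = e

theorem mem_Ew {e : ℕ} {J : Fin s → ℕ} : J ∈ Ew s e ↔ ∑ l, J l = e := by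
  simp only [Ew, Finset.mem_filter, Fintype.mem_piFinset, Finset.mem_range]
  constructor
  · tauto
  · intro h
    refine ⟨fun l => ?_, h⟩
    have : J l ≤ ∑ l', J l' :=
      Finset.single_le_sum (f := fun l => J l) (fun _ _ => Nat.zero_le _) (Finset.mem_univ l)
    omega

theorem coeff_line_monomial (n : Fin s →₀ ℕ) (c : F) (x v : Fin s → F) (e : ℕ) :
    (MvPolynomial.aeval (fun l => Polynomial.C (x l) + Polynomial.X * Polynomial.C (v l))
        (monomial n c) : Polynomial F).coeff e
      = ∑ J ∈ Ew s e, (∏ l, v l ^ J l) *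
          eval x (hasseDeriv (Finsupp.equivFunOnFinite.symm J) (monomial n c)) := by
  classical
  set T : Finset (Fin s → ℕ) :=
    (Fintype.piFinset fun l => Finset.range (n l + e + 1)).filter fun J => e = ∑ l, J l with hT
  set g : (Fin s → ℕ) → F :=
    fun J => c * ∏ l, (x l ^ (n l - J l) * v l ^ J l * ((n l).choose (J l) : F)) with hg
  have key : ∀ J : Fin s → ℕ, (∏ l, v l ^ J l) *
      eval x (hasseDeriv (Finsupp.equivFunOnFinite.symm J) (monomial n c)) = g J := by
    intro J
    rw [hasseDeriv_monomial, eval_monomial, Finsupp.prod_fintype _ _ (fun l => pow_zero _)]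
    simp only [Finsupp.tsub_apply, Finsupp.coe_equivFunOnFinite_symm, hg]
    rw [Finset.prod_mul_distrib, Finset.prod_mul_distrib]
    ring
  have hR : ∑ J ∈ Ew s e, (∏ l, v l ^ J l) *
      eval x (hasseDeriv (Finsupp.equivFunOnFinite.symm J) (monomial n c)) = ∑ J ∈ T, g J := by
    rw [Finset.sum_congr rfl fun J _ => key J]
    apply Finset.sum_congr _ fun _ _ => rfl
    ext J
    simp only [mem_Ew, hT, Finset.mem_filter, Fintype.mem_piFinset, Finset.mem_range]
    constructor
    · intro h
      refine ⟨fun l => ?_, h.symm⟩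
      have : J l ≤ ∑ l', J l' :=
        Finset.single_le_sum (f := fun l => J l) (fun _ _ => Nat.zero_le _) (Finset.mem_univ l)
      omega
    · exact fun h => h.2.symm
  have hL : (MvPolynomial.aeval (fun l => Polynomial.C (x l) + Polynomial.X * Polynomial.C (v l))
        (monomial n c) : Polynomial F).coeff e = ∑ J ∈ T, g J := by
    rw [aeval_monomial, Finsupp.prod_fintype _ _ (fun l => pow_zero _)]
    simp_rw [pow_add_expand]
    rw [Finset.prod_univ_sum]
    simp_rw [Finset.prod_mul_distrib, ← map_prod, Finset.prod_pow_eq_pow_sum]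
    rw [Polynomial.algebraMap_eq, Polynomial.coeff_C_mul, Polynomial.finset_sum_coeff]
    simp_rw [Polynomial.coeff_C_mul, Polynomial.coeff_X_pow, mul_ite, mul_one, mul_zero]
    rw [Finset.mul_sum]
    simp_rw [mul_ite, mul_zero]
    rw [← Finset.sum_filter]
    apply Finset.sum_subset
    · refine Finset.filter_subset_filter _ ?_
      intro J hJ
      simp only [Fintype.mem_piFinset, Finset.mem_range] at hJ ⊢
      intro l
      have := hJ l
      omega
    · intro J hJ hJn
      simp only [hT, Finset.mem_filter, Fintype.mem_piFinset, Finset.mem_range] at hJ hJn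
      obtain ⟨l, hl⟩ : ∃ l, ¬ J l < n l + 1 := by
        by_contra hcon
        push_neg at hcon
        exact hJn ⟨hcon, hJ.2⟩
      have hz : x l ^ (n l - J l) * v l ^ J l * ((n l).choose (J l) : F) = 0 := by
        rw [Nat.choose_eq_zero_of_lt (by omega)]
        simp
      rw [Finset.prod_eq_zero (Finset.mem_univ l) hz, mul_zero]
  rw [hL, hR]

theorem coeff_line (f : MvPolynomial (Fin s) F) (x v : Fin s → F) (e : ℕ) :
    (MvPolynomial.aeval (fun l => Polynomial.C (x l) + Polynomial.X * Polynomial.C (v l)) f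
       : Polynomial F).coeff e
      = ∑ J ∈ Ew s e, (∏ l, v l ^ J l) *
          eval x (hasseDeriv (Finsupp.equivFunOnFinite.symm J) f) := by
  conv_lhs => rw [f.as_sum]
  conv_rhs => rw [f.as_sum]
  rw [map_sum, Polynomial.finset_sum_coeff]
  simp_rw [hasseDeriv_sum, map_sum, Finset.mul_sum]
  rw [Finset.sum_comm]
  exact Finset.sum_congr rfl fun n _ => coeff_line_monomial n _ x v e

theorem taylor_line (f : MvPolynomial (Fin s) F) (x v : Fin s → F) (t : F) :
    Polynomial.taylor t
        (MvPolynomial.aeval (fun l => Polynomial.C (x l) + Polynomial.X * Polynomial.C (v l)) f)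
      = MvPolynomial.aeval
          (fun l => Polynomial.C (x l + t * v l) + Polynomial.X * Polynomial.C (v l)) f := by
  have h2 : ∀ p : Polynomial F,
      Polynomial.taylor t p = Polynomial.aeval (Polynomial.X + Polynomial.C t) p := by
    intro p
    rw [Polynomial.taylor_apply, Polynomial.comp, Polynomial.aeval_def, Polynomial.algebraMap_eq]
  rw [h2, ← AlgHom.comp_apply, MvPolynomial.comp_aeval]
  have hfun : (fun i => (Polynomial.aeval (Polynomial.X + Polynomial.C t))
        (Polynomial.C (x i) + Polynomial.X * Polynomial.C (v i)))
      = fun l => Polynomial.C (x l + t * v l) + Polynomial.X * Polynomial.C (v l) := by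
    funext l
    simp only [map_add, map_mul, Polynomial.aeval_X, Polynomial.aeval_C, Polynomial.algebraMap_eq]
    ring
  rw [hfun]

theorem pow_sub_dvd_of_taylor (h : Polynomial F) (t : F) (m : ℕ)
    (hc : ∀ e < m, (Polynomial.taylor t h).coeff e = 0) :
    (Polynomial.X - Polynomial.C t) ^ m ∣ h := by
  obtain ⟨g1, hg1⟩ := (Polynomial.X_pow_dvd_iff).2 hc
  have hh : h = Polynomial.taylor (-t) (Polynomial.taylor t h) := by
    rw [Polynomial.taylor_taylor]
    simp
  rw [hh, hg1, Polynomial.taylor_mul]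
  refine Dvd.dvd.mul_right ?_ _
  have : Polynomial.taylor (-t) ((Polynomial.X : Polynomial F) ^ m)
      = (Polynomial.X - Polynomial.C t) ^ m := by
    rw [Polynomial.taylor_apply, Polynomial.X_pow_comp]
    rw [Polynomial.C_neg]
    ring_nf
  rw [this]

theorem card_sum_replicate (m : ℕ) (T : Finset F) :
    Multiset.card (∑ t ∈ T, Multiset.replicate m t) = m * T.card := by
  classical
  induction T using Finset.induction with
  | empty => simp
  | insert _ _ hnm ih =>
    rename_i a T'
    rw [Finset.sum_insert hnm, Multiset.card_add, ih, Multiset.card_replicate,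
      Finset.card_insert_of_notMem hnm]
    ring

theorem poly_zero_of_many_roots (h : Polynomial F) (d m : ℕ) (hdeg : h.natDegree ≤ d)
    (T : Finset F) (hT : d < m * T.card)
    (hroots : ∀ t ∈ T, (Polynomial.X - Polynomial.C t) ^ m ∣ h) : h = 0 := by
  classical
  by_contra hne
  have hM : (∑ t ∈ T, Multiset.replicate m t) ≤ h.roots := by
    rw [Multiset.le_iff_count]
    intro a
    rw [Polynomial.count_roots, Multiset.count_sum']
    by_cases ha : a ∈ T
    · rw [Finset.sum_eq_single_of_mem a ha]
      · rw [Multiset.count_replicate_self]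
        exact (Polynomial.le_rootMultiplicity_iff hne).2 (hroots a ha)
      · intro b _ hb
        rw [Multiset.count_replicate, if_neg hb]
    · rw [Finset.sum_eq_zero]
      · exact Nat.zero_le _
      · intro b hb
        rw [Multiset.count_replicate, if_neg]
        rintro rfl
        exact ha hb
  have hcard := Multiset.card_le_card hM
  have h1 := card_sum_replicate m T
  have h2 := h.card_roots'
  omega

theorem natDegree_line_le (f : MvPolynomial (Fin s) F) (x v : Fin s → F) :
    (MvPolynomial.aeval (fun l => Polynomial.C (x l) + Polynomial.X * Polynomial.C (v l)) f
       : Polynomial F).natDegree ≤ f.totalDegree := by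
  conv_lhs => rw [f.as_sum]
  rw [map_sum]
  apply Polynomial.natDegree_sum_le_of_forall_le
  intro n hn
  rw [aeval_monomial]
  refine le_trans (Polynomial.natDegree_mul_le) ?_
  rw [Polynomial.algebraMap_eq, Polynomial.natDegree_C, zero_add]
  rw [Finsupp.prod]
  refine le_trans (Polynomial.natDegree_prod_le _ _) ?_
  refine le_trans (Finset.sum_le_sum (f := fun l => ((Polynomial.C (x l) + Polynomial.X *
      Polynomial.C (v l)) ^ n l).natDegree) (g := fun l => n l) ?_) ?_
  · intro l _
    refine le_trans (Polynomial.natDegree_pow_le) ?_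
    have h1 : (Polynomial.C (x l) + Polynomial.X * Polynomial.C (v l)).natDegree ≤ 1 := by
      refine le_trans (Polynomial.natDegree_add_le _ _) ?_
      simp only [Polynomial.natDegree_C, max_le_iff]
      refine ⟨Nat.zero_le _, le_trans (Polynomial.natDegree_mul_le) ?_⟩
      simp [Polynomial.natDegree_X_le]
    calc n l * (Polynomial.C (x l) + Polynomial.X * Polynomial.C (v l)).natDegree
        ≤ n l * 1 := Nat.mul_le_mul_left _ h1
      _ = n l := Nat.mul_one _
  · exact MvPolynomial.le_totalDegree hn

theorem grid_vanish : ∀ {r : ℕ} (g : MvPolynomial (Fin r) F) (B : Fin r → Finset F),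
    (∀ l, g.degreeOf l < (B l).card) →
    (∀ u : Fin r → F, (∀ l, u l ∈ B l) → eval u g = 0) → g = 0 := by
  intro r
  induction r with
  | zero =>
    intro g B _ hvan
    obtain ⟨a, rfl⟩ := MvPolynomial.C_surjective (Fin 0) g
    have := hvan (fun l => l.elim0) (fun l => l.elim0)
    rw [eval_C] at this
    rw [this, map_zero]
  | succ r ih =>
    intro g B hdeg hvan
    set p := finSuccEquiv F r g with hp
    have hcoeff : ∀ i, p.coeff i = 0 := by
      intro i
      apply ih (p.coeff i) (fun l => B l.succ)
      · intro l
        exact lt_of_le_of_lt (degreeOf_coeff_finSuccEquiv g l i) (hdeg l.succ)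
      · intro u' hu'
        have hq : (p.map (eval u')) = 0 := by
          apply Polynomial.eq_zero_of_natDegree_lt_card_of_eval_eq_zero' _ (B 0)
          · intro y hy
            rw [← eval_eq_eval_mv_eval']
            apply hvan
            intro l
            refine Fin.cases ?_ ?_ l
            · simpa using hy
            · intro l'
              simpa using hu' l'
          · refine lt_of_le_of_lt (le_trans (Polynomial.natDegree_map_le) ?_) (hdeg 0)
            rw [natDegree_finSuccEquiv]
        have := congrArg (fun q => Polynomial.coeff q i) hq
        simpa [Polynomial.coeff_map] using this
    have hp0 : p = 0 := Polynomial.ext fun i => by rw [hcoeff, Polynomial.coeff_zero]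
    have := congrArg (finSuccEquiv F r).symm (hp0)
    simpa [hp] using this

theorem key_recover [NeZero s] (m d : ℕ) (hm : 0 < m)
    (w0 : Fin s → F) (B : Fin s → Finset F) (hB0 : B 0 = {1})
    (hBcard : ∀ l, l ≠ 0 → m ≤ (B l).card)
    (R : Set (Fin s → F))
    (hline : ∀ v : Fin s → F, (∀ l, v l ∈ B l) → ∃ T : Finset F,
      (∀ t ∈ T, (w0 + t • v) ∈ R) ∧ d < m * T.card)
    (f : MvPolynomial (Fin s) F) (hf : f.totalDegree ≤ d)
    (hvanR : ∀ u ∈ R, ∀ i : Fin s →₀ ℕ, (∑ j, i j) < m → eval u (hasseDeriv i f) = 0) :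
    ∀ i : Fin s →₀ ℕ, (∑ j, i j) < m → eval w0 (hasseDeriv i f) = 0 := by
  classical
  have hzero : ∀ v : Fin s → F, (∀ l, v l ∈ B l) →
      (MvPolynomial.aeval
        (fun l => Polynomial.C (w0 l) + Polynomial.X * Polynomial.C (v l)) f
          : Polynomial F) = 0 := by
    intro v hv
    obtain ⟨T, hTR, hTc⟩ := hline v hv
    apply poly_zero_of_many_roots _ d m (le_trans (natDegree_line_le f w0 v) hf) T hTc
    intro t ht
    apply pow_sub_dvd_of_taylor
    intro e he
    rw [taylor_line, coeff_line f (fun l => w0 l + t * v l) v e]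
    apply Finset.sum_eq_zero
    intro J hJ
    have hJw : (∑ j, (Finsupp.equivFunOnFinite.symm J) j) < m := by
      simp only [Finsupp.coe_equivFunOnFinite_symm]
      rw [mem_Ew.1 hJ]
      exact he
    have hmem : (fun l => w0 l + t * v l) = w0 + t • v := by
      funext l
      simp [Pi.add_apply, Pi.smul_apply, smul_eq_mul]
    rw [hmem, hvanR _ (hTR t ht) _ hJw, mul_zero]
  intro i hi
  set e := ∑ j, i j with he
  set A : (Fin s → ℕ) → F :=
    fun J => eval w0 (hasseDeriv (Finsupp.equivFunOnFinite.symm J) f) with hA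
  set G : MvPolynomial (Fin s) F :=
    ∑ J ∈ Ew s e, monomial (Finsupp.equivFunOnFinite.symm (Function.update J 0 0)) (A J) with hG
  have hGvan : ∀ u : Fin s → F, (∀ l, u l ∈ B l) → eval u G = 0 := by
    intro u hu
    have hu0 : u 0 = 1 := by
      have := hu 0
      rw [hB0] at this
      simpa using this
    have hcoe : (MvPolynomial.aeval
        (fun l => Polynomial.C (w0 l) + Polynomial.X * Polynomial.C (u l)) f
          : Polynomial F).coeff e = 0 := by
      rw [hzero u hu, Polynomial.coeff_zero]
    rw [coeff_line] at hcoe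
    rw [hG, map_sum]
    simp_rw [eval_monomial]
    rw [← hcoe]
    apply Finset.sum_congr rfl
    intro J hJ
    rw [Finsupp.prod_fintype _ _ (fun l => pow_zero _)]
    simp only [Finsupp.coe_equivFunOnFinite_symm]
    have hprod : (∏ l, u l ^ (Function.update J 0 0 l)) = ∏ l, u l ^ J l := by
      apply Finset.prod_congr rfl
      intro l _
      by_cases hl : l = 0
      · subst hl
        rw [Function.update_self, hu0, pow_zero, one_pow]
      · rw [Function.update_of_ne hl]
    rw [hprod]
    ring
  have hGdeg : ∀ l, G.degreeOf l < (B l).card := by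
    intro l
    have hpos : 0 < (B l).card := by
      by_cases hl : l = 0
      · subst hl; rw [hB0]; simp
      · exact lt_of_lt_of_le hm (hBcard l hl)
    rw [MvPolynomial.degreeOf_lt_iff hpos]
    intro n hn
    obtain ⟨J, hJ, hnJ⟩ := Finset.mem_biUnion.1 (MvPolynomial.support_sum hn)
    have hn' : n = Finsupp.equivFunOnFinite.symm (Function.update J 0 0) := by
      have := MvPolynomial.support_monomial_subset hnJ
      simpa using this
    subst hn'
    simp only [Finsupp.coe_equivFunOnFinite_symm]
    by_cases hl : l = 0
    · subst hl
      rw [Function.update_self, hB0]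
      simp
    · rw [Function.update_of_ne hl]
      have hJl : J l ≤ e := by
        rw [← mem_Ew.1 hJ]
        exact Finset.single_le_sum (f := fun l => J l) (fun _ _ => Nat.zero_le _)
          (Finset.mem_univ l)
      exact lt_of_le_of_lt hJl (lt_of_lt_of_le hi (hBcard l hl))
  have hG0 : G = 0 := grid_vanish G B hGdeg hGvan
  have hiJ : (⇑i : Fin s → ℕ) ∈ Ew s e := mem_Ew.2 he.symm
  have hextr : MvPolynomial.coeff (Finsupp.equivFunOnFinite.symm (Function.update (⇑i) 0 0)) G
      = A ⇑i := by
    rw [hG, MvPolynomial.coeff_sum]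
    rw [Finset.sum_eq_single_of_mem (⇑i) hiJ]
    · rw [MvPolynomial.coeff_monomial, if_pos rfl]
    · intro J hJ hne
      rw [MvPolynomial.coeff_monomial, if_neg]
      intro hcon
      apply hne
      have h1 : Function.update J 0 0 = Function.update (⇑i) 0 0 :=
        Finsupp.equivFunOnFinite.symm.injective hcon
      have h2 : ∀ l, l ≠ (0 : Fin s) → J l = i l := by
        intro l hl
        have := congrFun h1 l
        rwa [Function.update_of_ne hl, Function.update_of_ne hl] at this
      have h3 : J 0 = i 0 := by
        have hsJ : ∑ l, J l = e := mem_Ew.1 hJ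
        have hsI : ∑ l, (⇑i) l = e := he.symm
        rw [← Finset.add_sum_erase _ _ (Finset.mem_univ 0)] at hsJ hsI
        have heq : ∑ l ∈ Finset.univ.erase (0 : Fin s), J l
            = ∑ l ∈ Finset.univ.erase (0 : Fin s), (⇑i) l := by
          apply Finset.sum_congr rfl
          intro l hl
          exact h2 l (Finset.ne_of_mem_erase hl)
        omega
      funext l
      by_cases hl : l = 0
      · subst hl; exact h3
      · exact h2 l hl
  rw [hG0, MvPolynomial.coeff_zero] at hextr
  have hAi : A ⇑i = eval w0 (hasseDeriv i f) := by
    show eval w0 (hasseDeriv (Finsupp.equivFunOnFinite.symm ⇑i) f) = _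
    rw [Finsupp.equivFunOnFinite_symm_coe]
  rw [← hAi, ← hextr]

theorem exists_blocks [Fintype F] (q m K : ℕ) (hcard : Fintype.card F = q) (hm : 0 < m)
    (hKm : K * m ≤ q) :
    ∃ Bl : Fin K → Finset F, (∀ t, (Bl t).card = m) ∧
      (∀ t t', t ≠ t' → Disjoint (Bl t) (Bl t')) := by
  classical
  let eF : F ≃ Fin q := Fintype.equivFinOfCardEq hcard
  have hlt : ∀ (t : Fin K) (r : Fin m), (t : ℕ) * m + (r : ℕ) < q := by
    intro t r
    have h1 : (t : ℕ) + 1 ≤ K := t.2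
    calc (t : ℕ) * m + (r : ℕ) < (t : ℕ) * m + m := by omega
      _ = ((t : ℕ) + 1) * m := by ring
      _ ≤ K * m := Nat.mul_le_mul_right m h1
      _ ≤ q := hKm
  refine ⟨fun t => Finset.univ.image (fun r : Fin m => eF.symm ⟨(t : ℕ) * m + (r : ℕ), hlt t r⟩),
    ?_, ?_⟩
  · intro t
    rw [Finset.card_image_of_injective _ ?_, Finset.card_univ, Fintype.card_fin]
    intro r r' hrr
    have := eF.symm.injective hrr
    have h2 : (t : ℕ) * m + (r : ℕ) = (t : ℕ) * m + (r' : ℕ) := congrArg Fin.val this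
    exact Fin.ext (by omega)
  · intro t t' htt
    rw [Finset.disjoint_left]
    intro a ha ha'
    simp only [Finset.mem_image, Finset.mem_univ, true_and] at ha ha'
    obtain ⟨r, hr⟩ := ha
    obtain ⟨r', hr'⟩ := ha'
    have := eF.symm.injective (hr.trans hr'.symm)
    have h2 : (t : ℕ) * m + (r : ℕ) = (t' : ℕ) * m + (r' : ℕ) := congrArg Fin.val this
    apply htt
    apply Fin.ext
    have hrm : (r : ℕ) < m := r.2
    have hrm' : (r' : ℕ) < m := r'.2
    by_contra hne
    rcases Nat.lt_or_ge (t : ℕ) (t' : ℕ) with h | h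
    · nlinarith
    · have : (t' : ℕ) < (t : ℕ) := by omega
      nlinarith

end Stmt7Aux

open Stmt7Aux in
/-- For `s ≥ 2`, `k ≤ ⌊q/m⌋^(s-1)` and `d ≤ m(q - k·m^(s-1) - 2)`, the
multiplicity code `C(m,d,s,q)` is a `k`-batch code: every multiset request `w₁,…,w_k` of
coordinates can be answered by pairwise disjoint recovering sets `R₁,…,R_k` with
`w_j ∉ R_j`. -/
theorem stmt7 {F : Type*} [Field F] [Fintype F] (q m d s k : ℕ)
    (hcard : Fintype.card F = q) (hm : 0 < m) (hd : 0 < d) (hs : 2 ≤ s) (hk : 0 < k)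
    (hkq : k ≤ (q / m) ^ (s - 1))
    (hdq : d ≤ m * (q - k * m ^ (s - 1) - 2)) :
    ∀ w : Fin k → (Fin s → F),
      ∃ R : Fin k → Set (Fin s → F),
        (∀ a b, a ≠ b → Disjoint (R a) (R b)) ∧
        (∀ a, w a ∉ R a) ∧
        (∀ a, ∀ P Q : MvPolynomial (Fin s) F, P.totalDegree ≤ d → Q.totalDegree ≤ d →
          (∀ u ∈ R a, ∀ i : Fin s →₀ ℕ, (∑ j : Fin s, i j) < m →
            eval u (hasseDeriv i P) = eval u (hasseDeriv i Q)) →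
          ∀ i : Fin s →₀ ℕ, (∑ j : Fin s, i j) < m →
            eval (w a) (hasseDeriv i P) = eval (w a) (hasseDeriv i Q)) := by
  classical
  intro w
  haveI : NeZero s := ⟨by omega⟩
  set M1 := m ^ (s - 1) with hM1def
  have hM1 : 1 ≤ M1 := Nat.one_le_iff_ne_zero.2 (pow_ne_zero _ (by omega))
  have hMk : M1 ≤ k * M1 := Nat.le_mul_of_pos_left _ hk
  have hq3 : k * M1 + 3 ≤ q := by
    rcases Nat.lt_or_ge q (k * M1 + 3) with h | h
    · exfalso
      have hz : q - k * M1 - 2 = 0 := by omega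
      rw [hz, Nat.mul_zero] at hdq
      omega
    · exact h
  have hmM1 : m ≤ M1 := Nat.le_self_pow (by omega) m
  set K := q / m with hKdef
  have hKm : K * m ≤ q := Nat.div_mul_le_self q m
  obtain ⟨Bl, hBlcard, hBldis⟩ := exists_blocks (F := F) q m K hcard hm hKm
  -- the embedding picking pairwise distinct direction grids
  have hcards : Fintype.card (Fin k) ≤ Fintype.card ({l : Fin s // l ≠ 0} → Fin K) := by
    rw [Fintype.card_fun, Fintype.card_fin, Fintype.card_fin]
    have hsub : Fintype.card {l : Fin s // l ≠ 0} = s - 1 := by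
      have := Fintype.card_subtype_compl (fun l : Fin s => l = 0)
      rw [Fintype.card_subtype_eq (0 : Fin s), Fintype.card_fin] at this
      exact this
    rw [hsub]
    exact hkq
  obtain ⟨emb⟩ := Function.Embedding.nonempty_of_card_le hcards
  set B : Fin k → Fin s → Finset F :=
    fun j l => if h : l = (0 : Fin s) then {(1 : F)} else Bl (emb j ⟨l, h⟩) with hB
  have hB0 : ∀ j, B j 0 = {1} := fun j => by simp [hB]
  have hBl : ∀ j l (h : l ≠ (0 : Fin s)), B j l = Bl (emb j ⟨l, h⟩) := by
    intro j l h
    simp [hB, h]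
  have hBcard : ∀ j l, l ≠ (0 : Fin s) → m ≤ (B j l).card := by
    intro j l h
    rw [hBl j l h, hBlcard]
  have hVdis : ∀ j j', j ≠ j' → ∀ v : Fin s → F,
      (∀ l, v l ∈ B j l) → (∀ l, v l ∈ B j' l) → False := by
    intro j j' hne v hv hv'
    have hii : emb j ≠ emb j' := fun hcon => hne (emb.injective hcon)
    obtain ⟨l0, hl0⟩ : ∃ l0, emb j l0 ≠ emb j' l0 := by
      by_contra hc
      push_neg at hc
      exact hii (funext hc)
    have h1 := hv l0.1
    have h2 := hv' l0.1
    rw [hBl j l0.1 l0.2] at h1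
    rw [hBl j' l0.1 l0.2] at h2
    exact (Finset.disjoint_left.1 (hBldis _ _ hl0)) h1 h2
  set L : Fin k → Set (Fin s → F) := fun j =>
    {p | ∃ v : Fin s → F, (∀ l, v l ∈ B j l) ∧ ∃ t : F, t ≠ 0 ∧ p = w j + t • v} with hL
  set R : Fin k → Set (Fin s → F) := fun j =>
    {p | p ∈ L j ∧ ∀ j', j' ≠ j → p ∉ L j'} with hR
  have hVcard : ∀ j', (Fintype.piFinset (B j')).card = M1 := by
    intro j'
    rw [Fintype.card_piFinset]
    rw [← Finset.prod_erase_mul _ _ (Finset.mem_univ (0 : Fin s))]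
    rw [hB0 j', Finset.card_singleton, mul_one]
    rw [Finset.prod_congr rfl (fun l hl => by
      rw [hBl j' l (Finset.ne_of_mem_erase hl), hBlcard])]
    rw [Finset.prod_const, Finset.card_erase_of_mem (Finset.mem_univ _), Finset.card_univ,
      Fintype.card_fin]
  refine ⟨R, ?_, ?_, ?_⟩
  · intro a b hab
    rw [Set.disjoint_left]
    intro p hpa hpb
    exact hpa.2 b (fun h => hab h.symm) hpb.1
  · intro a ha
    obtain ⟨v, hv, t, ht, heq⟩ := ha.1
    have hv0 : v 0 = 1 := by
      have := hv 0
      rw [hB0] at this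
      simpa using this
    have h0 := congrFun heq 0
    simp only [Pi.add_apply, Pi.smul_apply, smul_eq_mul, hv0, mul_one] at h0
    exact ht (left_eq_add.1 h0)
  · intro a P Q hP hQ hcond i hwt
    set f := P - Q with hf
    have hfd : f.totalDegree ≤ d := by
      refine le_trans (MvPolynomial.totalDegree_sub P Q) ?_
      exact max_le hP hQ
    have hvan : ∀ u ∈ R a, ∀ i' : Fin s →₀ ℕ, (∑ j, i' j) < m →
        eval u (hasseDeriv i' f) = 0 := by
      intro u hu i' hi'
      rw [hf, hasseDeriv_sub, map_sub, hcond u hu i' hi', sub_self]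
    have hline : ∀ v : Fin s → F, (∀ l, v l ∈ B a l) → ∃ T : Finset F,
        (∀ t ∈ T, (w a + t • v) ∈ R a) ∧ d < m * T.card := by
      intro v hv
      have hv0 : v 0 = 1 := by
        have := hv 0
        rw [hB0] at this
        simpa using this
      set T : Finset F := Finset.univ.filter (fun t => t ≠ 0 ∧ (w a + t • v) ∈ R a) with hT
      refine ⟨T, fun t ht => ((Finset.mem_filter.1 ht).2).2, ?_⟩
      set bad : Finset F :=
        Finset.univ.filter (fun t => ¬(t ≠ 0 ∧ (w a + t • v) ∈ R a)) with hbad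
      have hTbad : T.card + bad.card = q := by
        rw [hT, hbad, Finset.card_filter_add_card_filter_not, Finset.card_univ, hcard]
      have hbadsub : bad ⊆ insert (0 : F)
          ((Finset.univ.filter (· ≠ a)).biUnion fun j' =>
            (Fintype.piFinset (B j')).biUnion fun v' =>
              Finset.univ.filter fun t => ∃ t' : F, t' ≠ 0 ∧ w a + t • v = w j' + t' • v') := by
        intro t htmem
        rw [hbad, Finset.mem_filter] at htmem
        have htm := htmem.2
        by_cases ht0 : t = 0
        · rw [ht0]
          exact Finset.mem_insert_self _ _
        · refine Finset.mem_insert_of_mem ?_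
          have hpL : (w a + t • v) ∈ L a := ⟨v, hv, t, ht0, rfl⟩
          have hnR : ¬ ((w a + t • v) ∈ R a) := fun hc => htm ⟨ht0, hc⟩
          have hex : ∃ j', j' ≠ a ∧ (w a + t • v) ∈ L j' := by
            by_contra hc
            push_neg at hc
            exact hnR ⟨hpL, fun j' hj' => hc j' hj'⟩
          obtain ⟨j', hj', v', hv', t', ht', heq⟩ := hex
          refine Finset.mem_biUnion.2 ⟨j', Finset.mem_filter.2 ⟨Finset.mem_univ _, hj'⟩,
            Finset.mem_biUnion.2 ⟨v', Fintype.mem_piFinset.2 hv', Finset.mem_filter.2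
              ⟨Finset.mem_univ _, ⟨t', ht', heq⟩⟩⟩⟩
      have hinner : ∀ j', j' ≠ a → ∀ v' : Fin s → F, (∀ l, v' l ∈ B j' l) →
          (Finset.univ.filter fun t : F =>
            ∃ t' : F, t' ≠ 0 ∧ w a + t • v = w j' + t' • v').card ≤ 1 := by
        intro j' hj' v' hv'
        have hv'0 : v' 0 = 1 := by
          have := hv' 0
          rw [hB0] at this
          simpa using this
        rw [Finset.card_le_one]
        intro t1 h1 t2 h2
        obtain ⟨t1', ht1', e1⟩ := (Finset.mem_filter.1 h1).2
        obtain ⟨t2', ht2', e2⟩ := (Finset.mem_filter.1 h2).2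
        by_contra hne12
        -- coordinatewise differences
        have hdiff : ∀ l, (t1 - t2) * v l = (t1' - t2') * v' l := by
          intro l
          have d1 := congrFun e1 l
          have d2 := congrFun e2 l
          simp only [Pi.add_apply, Pi.smul_apply, smul_eq_mul] at d1 d2
          linear_combination d1 - d2
        have h00 := hdiff 0
        rw [hv0, hv'0, mul_one, mul_one] at h00
        have hδ : t1 - t2 ≠ 0 := sub_ne_zero.2 hne12
        have hveq : v = v' := by
          funext l
          have := hdiff l
          rw [← h00] at this
          exact mul_left_cancel₀ hδ this
        exact hVdis a j' (fun h => hj' h.symm) v hv (hveq ▸ hv')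
      have hbadcard : bad.card ≤ 1 + (k - 1) * M1 := by
        refine le_trans (Finset.card_le_card hbadsub) ?_
        refine le_trans (Finset.card_insert_le _ _) ?_
        have hb1 : ((Finset.univ.filter (· ≠ a)).biUnion fun j' =>
            (Fintype.piFinset (B j')).biUnion fun v' =>
              Finset.univ.filter fun t : F => ∃ t' : F, t' ≠ 0 ∧ w a + t • v = w j' + t' • v').card
            ≤ (k - 1) * M1 := by
          refine le_trans Finset.card_biUnion_le ?_
          have hstep : ∀ j' ∈ Finset.univ.filter (· ≠ a),
              ((Fintype.piFinset (B j')).biUnion fun v' =>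
                Finset.univ.filter fun t : F =>
                  ∃ t' : F, t' ≠ 0 ∧ w a + t • v = w j' + t' • v').card ≤ M1 := by
            intro j' hj'mem
            have hj' : j' ≠ a := (Finset.mem_filter.1 hj'mem).2
            refine le_trans Finset.card_biUnion_le ?_
            refine le_trans (Finset.sum_le_sum fun v' hv'mem =>
              hinner j' hj' v' (Fintype.mem_piFinset.1 hv'mem)) ?_
            rw [Finset.sum_const, smul_eq_mul, mul_one, hVcard]
          refine le_trans (Finset.sum_le_sum hstep) ?_
          rw [Finset.sum_const, smul_eq_mul]
          have : (Finset.univ.filter (· ≠ a)).card = k - 1 := by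
            rw [Finset.filter_ne', Finset.card_erase_of_mem (Finset.mem_univ _),
              Finset.card_univ, Fintype.card_fin]
          rw [this]
        omega
      -- arithmetic
      have hkM : (k - 1) * M1 = k * M1 - M1 := by rw [Nat.sub_mul, one_mul]
      have hTcard : (q - k * M1 - 2) + (M1 + 1) ≤ T.card := by
        rw [hkM] at hbadcard
        omega
      have harith : d < m * ((q - k * M1 - 2) + (M1 + 1)) := by
        have h2 : m * ((q - k * M1 - 2) + (M1 + 1))
            = m * (q - k * M1 - 2) + m * (M1 + 1) := Nat.mul_add _ _ _
        have h3 : 1 ≤ m * (M1 + 1) := Nat.one_le_iff_ne_zero.2 (by positivity)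
        omega
      exact lt_of_lt_of_le harith (Nat.mul_le_mul_left m hTcard)
    have hres := key_recover (F := F) m d hm (w a) (B a) (hB0 a) (hBcard a) (R a)
      hline f hfd hvan i hwt
    rw [hf, hasseDeriv_sub, map_sub] at hres
    exact sub_eq_zero.1 hres
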